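/- For a fixed positive integer a and s(n) = ⌈4·log(n/2)⌉ + 1, the quantity (C(n, a·s(n))+1)^{a·s(n)+1} · n! / 2^{n(n−1)/2} tends to 0 as n → ∞. -/

import Mathlib

open Filter

lemma sq_le_two_pow_aux : ∀ k : ℕ, 4 ≤ k → k * k ≤ 2 ^ k := by
  intro k hk
  induction k with
  | zero => omega
  | succ m ih =>
    rcases Nat.lt_or_ge m 4 with hm | hm
    · interval_cases m <;> first | omega | norm_num
    · have h1 := ih hm
      have h2 : 2 * m + 1 ≤ m * m := by nlinarith
      have : (m + 1) * (m + 1) ≤ 2 ^ m + 2 ^ m := by nlinarith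
      calc (m + 1) * (m + 1) ≤ 2 ^ m + 2 ^ m := this
        _ = 2 ^ (m + 1) := by ring

lemma log2_le_sqrt {n : ℕ} (hn : 16 ≤ n) : Nat.log 2 n ≤ Nat.sqrt n := by
  set k := Nat.log 2 n with hk
  have h4 : 4 ≤ k := by
    rw [hk]
    exact (Nat.le_log_iff_pow_le (by norm_num) (by omega)).mpr
      (le_trans (by norm_num) hn)
  have hpow : 2 ^ k ≤ n := Nat.pow_log_le_self 2 (by omega)
  exact Nat.le_sqrt.mpr (le_trans (sq_le_two_pow_aux k h4) hpow)

lemma choose_le_two_pow_aux (n k : ℕ) : n.choose k ≤ 2 ^ n := by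
  rcases le_or_gt k n with h | h
  · calc n.choose k ≤ ∑ m ∈ Finset.range (n + 1), n.choose m :=
        Finset.single_le_sum (fun i _ => Nat.zero_le _) (Finset.mem_range.mpr (by omega))
      _ = 2 ^ n := Nat.sum_range_choose n
  · rw [Nat.choose_eq_zero_of_lt h]; exact Nat.zero_le _

/-- For fixed `a ≥ 1` and `s(n) = ⌈4·log(n/2)⌉ + 1`, the quantity
`(C(n, a·s(n)) + 1)^(a·s(n)+1) · n! / 2^(n(n-1)/2)` tends to `0` as `n → ∞`. -/
theorem key_counting_estimate (a : ℕ) (ha : 0 < a) :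
    Tendsto (fun n : ℕ =>
      let s : ℕ := ⌈4 * Real.log ((n : ℝ) / 2)⌉₊ + 1
      ((n.choose (a * s) : ℝ) + 1) ^ (a * s + 1) * (n.factorial : ℝ) /
        2 ^ (n * (n - 1) / 2))
      atTop (nhds 0) := by
  set C : ℕ := 5 * a + 3 with hC
  refine tendsto_of_tendsto_of_tendsto_of_le_of_le'
    (tendsto_const_nhds : Tendsto (fun _ : ℕ => (0:ℝ)) atTop (nhds 0))
    ((tendsto_pow_atTop_nhds_zero_of_lt_one (by norm_num) (by norm_num) :
      Tendsto (fun n : ℕ => ((1:ℝ)/2) ^ n) atTop (nhds 0)))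
    ?_ ?_
  · filter_upwards [] with n
    dsimp only
    positivity
  · filter_upwards [eventually_ge_atTop (max 16 ((8 * C + 1) ^ 2))] with n hn
    have hn16 : 16 ≤ n := le_trans (le_max_left _ _) hn
    have hnC : (8 * C + 1) ^ 2 ≤ n := le_trans (le_max_right _ _) hn
    dsimp only
    set s : ℕ := ⌈4 * Real.log ((n : ℝ) / 2)⌉₊ + 1 with hs
    set L : ℕ := Nat.log 2 n with hL
    -- bound on s
    have hnpos : (0:ℝ) < n := by positivity
    have hn2 : (0:ℝ) < (n:ℝ) / 2 := by positivity
    have hnlt : (n:ℝ) < 2 ^ (L + 1) := by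
      exact_mod_cast Nat.lt_pow_succ_log_self (by norm_num) n
    have hlog2 : Real.log 2 ≤ 1 := by
      linarith [Real.log_two_lt_d9]
    have hlogn : Real.log ((n:ℝ) / 2) ≤ (L:ℝ) + 1 := by
      have h1 : Real.log ((n:ℝ) / 2) ≤ Real.log (n:ℝ) :=
        Real.log_le_log hn2 (by linarith)
      have h2 : Real.log (n:ℝ) ≤ Real.log ((2:ℝ) ^ (L + 1)) :=
        Real.log_le_log hnpos hnlt.le
      rw [Real.log_pow] at h2
      push_cast at h2
      nlinarith [Real.log_nonneg (by norm_num : (1:ℝ) ≤ 2), hlog2]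
    have hsb : s ≤ 4 * L + 5 := by
      have : ⌈4 * Real.log ((n : ℝ) / 2)⌉₊ ≤ 4 * L + 4 := by
        apply Nat.ceil_le.mpr
        push_cast
        linarith [hlogn]
      omega
    -- exponent bound
    have hS : a * s + 1 ≤ (5 * a + 1) * (L + 1) := by nlinarith
    have hE : (n + 1) * (a * s + 1) + (L + 1) * n + n ≤ C * (n + 1) * (L + 1) := by
      have h1 : (n + 1) * (a * s + 1) ≤ (n + 1) * ((5 * a + 1) * (L + 1)) :=
        Nat.mul_le_mul_left _ hS
      rw [hC]
      nlinarith [h1, Nat.zero_le (n * L), Nat.zero_le n, Nat.zero_le L]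
    -- C * (n+1) * (L+1) ≤ n*(n-1)/2
    have hq : L ≤ Nat.sqrt n := log2_le_sqrt hn16
    set q : ℕ := Nat.sqrt n with hqdef
    have hq1 : 8 * C + 1 ≤ q := Nat.le_sqrt.mpr (by nlinarith)
    have hqq : q * q ≤ n := Nat.sqrt_le n
    have hfinal : C * (n + 1) * (L + 1) ≤ n * (n - 1) / 2 := by
      rw [Nat.le_div_iff_mul_le (by norm_num)]
      obtain ⟨m, rfl⟩ : ∃ m, n = m + 1 := ⟨n - 1, by omega⟩
      simp only [Nat.add_sub_cancel]
      have hq0 : 1 ≤ q := by omega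
      have hA : 8 * C * q ≤ m := by
        nlinarith [Nat.mul_le_mul_right q hq1, hqq]
      have e1 : C * (m + 1 + 1) * (L + 1) * 2 ≤ C * (2 * (m + 1)) * (2 * q) * 2 := by
        gcongr <;> omega
      calc C * (m + 1 + 1) * (L + 1) * 2 ≤ C * (2 * (m + 1)) * (2 * q) * 2 := e1
        _ = (8 * C * q) * (m + 1) := by ring
        _ ≤ m * (m + 1) := Nat.mul_le_mul_right _ hA
        _ = (m + 1) * m := Nat.mul_comm _ _
    have hexp : (n + 1) * (a * s + 1) + (L + 1) * n + n ≤ n * (n - 1) / 2 :=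
      le_trans hE hfinal
    -- nat key inequality
    have key : ((n.choose (a * s) + 1) ^ (a * s + 1) * n.factorial) * 2 ^ n
        ≤ 2 ^ (n * (n - 1) / 2) := by
      have h1 : n.choose (a * s) + 1 ≤ 2 ^ (n + 1) := by
        have := choose_le_two_pow_aux n (a * s)
        have h2 : 2 ^ (n + 1) = 2 ^ n + 2 ^ n := by ring
        have : 1 ≤ 2 ^ n := Nat.one_le_two_pow
        omega
      have h2 : (n.choose (a * s) + 1) ^ (a * s + 1) ≤ 2 ^ ((n + 1) * (a * s + 1)) := by
        rw [pow_mul]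
        exact Nat.pow_le_pow_left h1 _
      have h3 : n.factorial ≤ 2 ^ ((L + 1) * n) := by
        calc n.factorial ≤ n ^ n := Nat.factorial_le_pow n
          _ ≤ (2 ^ (L + 1)) ^ n :=
            Nat.pow_le_pow_left (Nat.lt_pow_succ_log_self (by norm_num) n).le n
          _ = 2 ^ ((L + 1) * n) := by rw [← pow_mul]
      calc ((n.choose (a * s) + 1) ^ (a * s + 1) * n.factorial) * 2 ^ n
          ≤ (2 ^ ((n + 1) * (a * s + 1)) * 2 ^ ((L + 1) * n)) * 2 ^ n :=
            Nat.mul_le_mul (Nat.mul_le_mul h2 h3) le_rfl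
        _ = 2 ^ ((n + 1) * (a * s + 1) + (L + 1) * n + n) := by
            rw [← pow_add, ← pow_add]
        _ ≤ 2 ^ (n * (n - 1) / 2) := Nat.pow_le_pow_right (by norm_num) hexp
    -- transfer to reals
    have key' : (((n.choose (a * s) : ℝ) + 1) ^ (a * s + 1) * (n.factorial : ℝ)) * 2 ^ n
        ≤ 2 ^ (n * (n - 1) / 2) := by exact_mod_cast key
    have hDpos : (0:ℝ) < 2 ^ (n * (n - 1) / 2) := by positivity
    rw [div_le_iff₀ hDpos]
    have heq : ((1:ℝ)/2) ^ n * 2 ^ (n * (n - 1) / 2)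
        = 2 ^ (n * (n - 1) / 2) / 2 ^ n := by
      rw [one_div, inv_pow]
      ring
    rw [heq, le_div_iff₀ (by positivity : (0:ℝ) < 2 ^ n)]
    exact key'
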